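/- Let A be a finite-dimensional commutative local ℂ-algebra with maximal ideal 𝔪. Suppose that for every a ∈ 𝔪∖{0} there exist m ∈ 𝔪, an integer k ≥ 1, and a unit c ∈ A^* such that m^{k+1} = 0 and m^k = c·a. Then 𝔪² = 0. -/

import Mathlib

/-- Let `A` be a finite-dimensional commutative local `ℂ`-algebra with maximal ideal `𝔪`.
Suppose that for every `a ∈ 𝔪 ∖ {0}` there exist `m ∈ 𝔪`, an integer `k ≥ 1` and a unit
`c ∈ A^*` such that `m^(k+1) = 0` and `m^k = c·a`.  Then `𝔪² = 0`. -/
theorem maximalIdeal_sq_eq_bot_of_op_condition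
    (A : Type*) [CommRing A] [Algebra ℂ A] [FiniteDimensional ℂ A] [IsLocalRing A]
    (hOP : ∀ a ∈ IsLocalRing.maximalIdeal A, a ≠ 0 →
      ∃ m ∈ IsLocalRing.maximalIdeal A, ∃ k : ℕ, 1 ≤ k ∧ ∃ c : Aˣ,
        m ^ (k + 1) = 0 ∧ m ^ k = (c : A) * a) :
    IsLocalRing.maximalIdeal A ^ 2 = ⊥ := by
  set 𝔪 := IsLocalRing.maximalIdeal A with h𝔪
  -- Step 1: any element of 𝔪 not in 𝔪² squares to zero.
  have key : ∀ a ∈ 𝔪, a ∉ 𝔪 ^ 2 → a * a = 0 := by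
    intro a ha ha2
    have hane : a ≠ 0 := by rintro rfl; exact ha2 (Submodule.zero_mem _)
    obtain ⟨m, hm, k, hk, c, hmk1, hmk⟩ := hOP a ha hane
    rcases eq_or_lt_of_le hk with hk1 | hk2
    · -- k = 1
      have hm2 : m ^ 2 = 0 := by rw [← hk1] at hmk1; exact hmk1
      have hmca : m = (c : A) * a := by rw [← hk1] at hmk; simpa using hmk
      have : (c : A) * (c : A) * (a * a) = 0 := by
        have := hm2
        rw [hmca] at this
        ring_nf at this ⊢
        linear_combination this
      have h2 : a * a = ((c⁻¹ : Aˣ) : A) * ((c⁻¹ : Aˣ) : A) * ((c : A) * (c : A) * (a * a)) := by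
        have hcc : ((c⁻¹ : Aˣ) : A) * (c : A) = 1 := Units.inv_mul c
        linear_combination (-(a * a) * (((c⁻¹ : Aˣ) : A) * (c : A) + 1)) * hcc
      rw [h2, this, mul_zero]
    · -- k ≥ 2 : then a ∈ 𝔪², contradiction
      exfalso
      apply ha2
      have hmem : m ^ k ∈ 𝔪 ^ 2 := by
        have : m ^ k = m * m * m ^ (k - 2) := by
          rw [← pow_two, ← pow_add]
          congr 1
          omega
        rw [this]
        exact Ideal.mul_mem_right _ _ (by rw [pow_two]; exact Ideal.mul_mem_mul hm hm)
      have : a = ((c⁻¹ : Aˣ) : A) * m ^ k := by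
        rw [hmk, ← mul_assoc]
        simp
      rw [this]
      exact Ideal.mul_mem_left _ _ hmem
  -- Step 2: products of two elements of 𝔪 ∖ 𝔪² vanish.
  have prod : ∀ x ∈ 𝔪, ∀ y ∈ 𝔪, x ∉ 𝔪 ^ 2 → y ∉ 𝔪 ^ 2 → x * y = 0 := by
    intro x hx y hy hx2 hy2
    -- x + t y ∉ 𝔪² for some t ∈ {1, 2}
    have htwo : ∀ t : A, x + t * y ∉ 𝔪 ^ 2 → x * y = 0 → True := fun _ _ _ => trivial
    have hcase : (x + y ∉ 𝔪 ^ 2) ∨ (x + 2 * y ∉ 𝔪 ^ 2) := by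
      by_contra h
      push_neg at h
      obtain ⟨h1, h2⟩ := h
      have hsub := Submodule.sub_mem _ h2 h1
      have hy' : x + 2 * y - (x + y) = y := by ring
      rw [hy'] at hsub
      exact hy2 hsub
    have hxx := key x hx hx2
    have hyy := key y hy hy2
    rcases hcase with h | h
    · have hs := key (x + y) (Submodule.add_mem _ hx hy) h
      have h2 : (2 : A) * (x * y) = 0 := by ring_nf; linear_combination hs - hxx - hyy
      have hu : ((1/2 : ℂ) • (2 : A)) = 1 := by
        rw [Algebra.smul_def, ← map_ofNat (algebraMap ℂ A) 2, ← map_mul]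
        norm_num
      calc x * y = ((1/2 : ℂ) • (2 : A)) * (x * y) := by rw [hu, one_mul]
        _ = (1/2 : ℂ) • ((2 : A) * (x * y)) := smul_mul_assoc _ _ _
        _ = 0 := by rw [h2, smul_zero]
    · have hs := key (x + 2 * y) (Submodule.add_mem _ hx (Ideal.mul_mem_left _ _ hy)) h
      have h4 : (4 : A) * (x * y) = 0 := by
        ring_nf
        linear_combination hs - hxx - 4 * hyy
      have hu : ((1/4 : ℂ) • (4 : A)) = 1 := by
        rw [Algebra.smul_def, ← map_ofNat (algebraMap ℂ A) 4, ← map_mul]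
        norm_num
      calc x * y = ((1/4 : ℂ) • (4 : A)) * (x * y) := by rw [hu, one_mul]
        _ = (1/4 : ℂ) • ((4 : A) * (x * y)) := smul_mul_assoc _ _ _
        _ = 0 := by rw [h4, smul_zero]
  -- Step 3: 𝔪² ≤ 𝔪³.
  have h23 : 𝔪 ^ 2 ≤ 𝔪 ^ 3 := by
    have : 𝔪 * 𝔪 ≤ 𝔪 ^ 3 := by
      rw [Ideal.mul_le]
      intro x hx y hy
      by_cases hx2 : x ∈ 𝔪 ^ 2
      · have : x * y ∈ 𝔪 ^ 2 * 𝔪 := Ideal.mul_mem_mul hx2 hy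
        rwa [← pow_succ] at this
      by_cases hy2 : y ∈ 𝔪 ^ 2
      · have : y * x ∈ 𝔪 ^ 2 * 𝔪 := Ideal.mul_mem_mul hy2 hx
        rw [← pow_succ] at this
        rwa [mul_comm]
      · rw [prod x hx y hy hx2 hy2]
        exact Submodule.zero_mem _
    rwa [← pow_two] at this
  -- Step 4: 𝔪² ≤ 𝔪^(2+k) for all k.
  have hall : ∀ k : ℕ, 𝔪 ^ 2 ≤ 𝔪 ^ (2 + k) := by
    intro k
    induction k with
    | zero => simp
    | succ n ih =>
      calc 𝔪 ^ 2 ≤ 𝔪 ^ 3 := h23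
        _ = 𝔪 ^ 2 * 𝔪 := by ring
        _ ≤ 𝔪 ^ (2 + n) * 𝔪 := Ideal.mul_mono_left ih
        _ = 𝔪 ^ (2 + (n + 1)) := by ring
  -- Step 5: 𝔪 is nilpotent.
  have hart : IsArtinianRing A := isArtinian_of_tower ℂ inferInstance
  obtain ⟨n, hn⟩ := IsArtinianRing.isNilpotent_jacobson_bot (R := A)
  rw [IsLocalRing.jacobson_eq_maximalIdeal ⊥ bot_ne_top] at hn
  have hle := hall (n + 2)
  have : 𝔪 ^ (2 + (n + 2)) ≤ 𝔪 ^ n := Ideal.pow_le_pow_right (by omega)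
  rw [hn] at this
  exact le_bot_iff.mp (hle.trans this)
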